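/- arXiv:1706.02916 — 4 statements merged into one kernel-verified Lean document; each statement's English description precedes it below -/
import Mathlib

section
/- Let φ : {1,…,k} → {1,…,l} be an injection and let a, b ∈ 𝓛(l) be ordered partitions with a ≼ b. Then φ*(a) ≼ φ*(b) in 𝓛(k); that is, the pullback map φ* : 𝓛(l) → 𝓛(k) is order preserving (so the ordered-partition posets 𝓛(l) form a preoperad of posets). -/
/-- An ordered partition of `{1,…,l}`: a pair `(ã, π)` where `ã` is a permutation of
`{1,…,l}` and `π : {1,…,l} → {1,…,t}` is a monotone surjection (for some `t`). -/
structure OrdPart (l : ℕ) where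
  blocks : ℕ
  perm : Equiv.Perm (Fin l)
  part : Fin l → Fin blocks
  mono : Monotone part
  surj : Function.Surjective part

/-- The partial order on `𝓛(l)`: `a ≼ b` iff (1) there is a monotone surjection `ρ`
with `ρ ∘ π_a ∘ ã⁻¹ = π_b ∘ b̃⁻¹`, and (2) whenever `π_a(i) = π_a(i+1)` then
`b̃⁻¹(ã(i)) < b̃⁻¹(ã(i+1))`. -/
def OrdPart.le {l : ℕ} (a b : OrdPart l) : Prop :=
  (∃ ρ : Fin a.blocks → Fin b.blocks, Monotone ρ ∧ Function.Surjective ρ ∧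
    ∀ x : Fin l, ρ (a.part (a.perm⁻¹ x)) = b.part (b.perm⁻¹ x)) ∧
  ∀ i j : Fin l, (j : ℕ) = (i : ℕ) + 1 → a.part i = a.part j →
    b.perm⁻¹ (a.perm i) < b.perm⁻¹ (a.perm j)

/-- `a'` is the pullback `φ*(a)` of the ordered partition `a` along an injection `φ`:
factoring the injection `ã⁻¹ ∘ φ` (uniquely) as `ι ∘ τ` with `τ` a permutation and
`ι` strictly increasing, and then the monotone map `π_a ∘ ι` (uniquely) as `μ ∘ π'`
with `π'` a monotone surjection and `μ` strictly increasing, we have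
`φ*(a) = (τ⁻¹, π')`; i.e. `a'.perm = τ⁻¹` and `a'.part = π'`. -/
def IsPullbackOrdPart {k l : ℕ} (φ : Fin k → Fin l) (a : OrdPart l) (a' : OrdPart k) :
    Prop :=
  ∃ ι : Fin k → Fin l, StrictMono ι ∧
    (∀ x : Fin k, a.perm⁻¹ (φ x) = ι (a'.perm⁻¹ x)) ∧
    ∃ μ : Fin a'.blocks → Fin a.blocks, StrictMono μ ∧
      ∀ x : Fin k, a.part (ι x) = μ (a'.part x)

/-- Within a block of `a`, the map `m ↦ b.perm⁻¹ (a.perm m)` is strictly increasing. -/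
lemma within_block {l : ℕ} (a b : OrdPart l)
    (hcons : ∀ i j : Fin l, (j : ℕ) = (i : ℕ) + 1 → a.part i = a.part j →
      b.perm⁻¹ (a.perm i) < b.perm⁻¹ (a.perm j)) :
    ∀ m n : Fin l, m < n → a.part m = a.part n →
      b.perm⁻¹ (a.perm m) < b.perm⁻¹ (a.perm n) := by
  have key : ∀ d : ℕ, ∀ m n : Fin l, (n : ℕ) = (m : ℕ) + d + 1 → a.part m = a.part n →
      b.perm⁻¹ (a.perm m) < b.perm⁻¹ (a.perm n) := by
    intro d
    induction d with
    | zero => intro m n h hp; exact hcons m n h hp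
    | succ d ih =>
      intro m n h hp
      have hmid : (m : ℕ) + d + 1 < l := by have := n.isLt; omega
      set mid : Fin l := ⟨(m : ℕ) + d + 1, hmid⟩ with hmiddef
      have hle1 : m ≤ mid := by simp [Fin.le_def, hmiddef]; omega
      have hle2 : mid ≤ n := by simp [Fin.le_def, hmiddef]; omega
      have hpm : a.part m = a.part mid :=
        le_antisymm (a.mono hle1) (hp ▸ a.mono hle2)
      have h1 := ih m mid rfl hpm
      have h2 := hcons mid n (by simp [hmiddef]; omega) (hpm ▸ hp)
      exact h1.trans h2
  intro m n hmn hp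
  exact key ((n : ℕ) - (m : ℕ) - 1) m n (by have := Fin.lt_def.mp hmn; omega) hp

/-- Let `φ : {1,…,k} → {1,…,l}` be an injection and `a ≼ b` in `𝓛(l)`.
Then `φ*(a) ≼ φ*(b)` in `𝓛(k)`: the pullback map `φ* : 𝓛(l) → 𝓛(k)` is order
preserving (so the ordered-partition posets form a preoperad of posets). -/
theorem stmt2 {k l : ℕ} (φ : Fin k → Fin l) (hφ : Function.Injective φ)
    (a b : OrdPart l) (hab : a.le b)
    (a' : OrdPart k) (ha' : IsPullbackOrdPart φ a a')
    (b' : OrdPart k) (hb' : IsPullbackOrdPart φ b b') :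
    a'.le b' := by
  obtain ⟨⟨ρ, hρmono, hρsurj, hρeq⟩, hcons⟩ := hab
  obtain ⟨ιa, hιa, hιaeq, μa, hμa, hμaeq⟩ := ha'
  obtain ⟨ιb, hιb, hιbeq, μb, hμb, hμbeq⟩ := hb'
  have hμbinj := hμb.injective
  -- the combined equation in Fin k
  have hmain : ∀ x : Fin k,
      ρ (μa (a'.part (a'.perm⁻¹ x))) = μb (b'.part (b'.perm⁻¹ x)) := by
    intro x
    have h1 := hρeq (φ x)
    rw [hιaeq, hμaeq, hιbeq, hμbeq] at h1
    exact h1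
  have hsa : ∀ y : Fin a'.blocks, ∃ x : Fin k, a'.part (a'.perm⁻¹ x) = y := by
    intro y
    obtain ⟨z, hz⟩ := a'.surj y
    exact ⟨a'.perm z, by simp [hz]⟩
  have hsb : ∀ y : Fin b'.blocks, ∃ x : Fin k, b'.part (b'.perm⁻¹ x) = y := by
    intro y
    obtain ⟨z, hz⟩ := b'.surj y
    exact ⟨b'.perm z, by simp [hz]⟩
  have hrange : ∀ y : Fin a'.blocks, ∃ z : Fin b'.blocks, μb z = ρ (μa y) := by
    intro y
    obtain ⟨x, hx⟩ := hsa y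
    exact ⟨b'.part (b'.perm⁻¹ x), by rw [← hx, (hmain x)]⟩
  choose ρ' hρ' using hrange
  have hkey : ∀ x : Fin k, ρ' (a'.part (a'.perm⁻¹ x)) = b'.part (b'.perm⁻¹ x) := by
    intro x
    apply hμbinj
    rw [hρ', hmain x]
  constructor
  · refine ⟨ρ', ?_, ?_, hkey⟩
    · intro y1 y2 hle
      have h : μb (ρ' y1) ≤ μb (ρ' y2) := by
        rw [hρ' y1, hρ' y2]; exact hρmono (hμa.monotone hle)
      exact hμb.le_iff_le.mp h
    · intro z
      obtain ⟨x, hx⟩ := hsb z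
      exact ⟨a'.part (a'.perm⁻¹ x), by rw [hkey x, hx]⟩
  · intro i j hji hpart
    have hij : i < j := by rw [Fin.lt_def]; omega
    have hι : ιa i < ιa j := hιa hij
    have hpartl : a.part (ιa i) = a.part (ιa j) := by
      rw [hμaeq, hμaeq, hpart]
    have hw := within_block a b hcons (ιa i) (ιa j) hι hpartl
    have ea : ∀ m : Fin k, a.perm (ιa m) = φ (a'.perm m) := by
      intro m
      have h := hιaeq (a'.perm m)
      simp only [Equiv.Perm.coe_inv, Equiv.symm_apply_apply] at h
      rw [← h]; simp
    have eb : ∀ m : Fin k, b.perm⁻¹ (φ (a'.perm m)) = ιb (b'.perm⁻¹ (a'.perm m)) := by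
      intro m; exact hιbeq (a'.perm m)
    rw [ea i, ea j, eb i, eb j] at hw
    exact hιb.lt_iff_lt.mp hw
end

section
/- Let G be a weak bi-Δ-group. For every n ≥ 1 and every x ∈ 𝔥_n G, the element d_0 x lies in 𝔥_{n−1} G, the resulting map p_n : 𝔥_n G → 𝔥_{n−1} G, x ↦ d_0 x, is a surjective group homomorphism, and its kernel is exactly the Moore cycle group Z_n G = ⋂_{j=0}^n ker(d_j). -/
universe u

section

variable (G : ℕ → Type u) [∀ n, Group (G n)]
variable (d : ∀ n : ℕ, ℕ → (G (n + 1) →* G n))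
variable (δ : ∀ n : ℕ, ℕ → (G n → G (n + 1)))

/-- The axioms of a weak bi-Δ-group: a sequence of groups `G n` with faces
`d n j : G (n+1) →* G n` (group homomorphisms, for `j ≤ n+1`) and cofaces
`δ n i : G n → G (n+1)` (mere functions, for `i ≤ n+1`), satisfying the
simplicial-type identities. -/
structure IsWeakBiDelta : Prop where
  face_face : ∀ n i j : ℕ, i ≤ j → j ≤ n + 1 → ∀ x : G (n + 2),
    d n i (d (n + 1) (j + 1) x) = d n j (d (n + 1) i x)
  coface_coface : ∀ n i j : ℕ, j ≤ i → i ≤ n + 1 → ∀ x : G n,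
    δ (n + 1) j (δ n i x) = δ (n + 1) (i + 1) (δ n j x)
  face_coface_lt : ∀ n i j : ℕ, j ≤ i → i ≤ n + 1 → ∀ x : G (n + 1),
    d (n + 1) j (δ (n + 1) (i + 1) x) = δ n i (d n j x)
  face_coface_eq : ∀ n i : ℕ, i ≤ n + 1 → ∀ x : G n, d n i (δ n i x) = x
  face_coface_gt : ∀ n i j : ℕ, i ≤ j → j ≤ n + 1 → ∀ x : G (n + 1),
    d (n + 1) (j + 1) (δ (n + 1) i x) = δ n i (d n j x)

/-- The `n`-th Cohen group `𝔥_n G = {x ∈ G_n : d_0 x = d_1 x = ⋯ = d_n x}`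
(with `𝔥_0 G = G_0`). -/
def cohenSet : ∀ n : ℕ, Set (G n)
  | 0 => Set.univ
  | m + 1 => { x : G (m + 1) | ∀ j, j ≤ m + 1 → d m j x = d m 0 x }

end

section Aux

variable {G : ℕ → Type u} [∀ n, Group (G n)]
variable {d : ∀ n : ℕ, ℕ → (G (n + 1) →* G n)}
variable {δ : ∀ n : ℕ, ℕ → (G n → G (n + 1))}

/-- Filling at the bottom level: every `y ∈ G 0` is the common value of both faces of
some element of `G 1`. -/
lemma fill0 (h : IsWeakBiDelta G d δ) (y : G 0) :
    ∃ x : G 1, d 0 0 x = y ∧ d 0 1 x = y := by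
  set A := δ 0 0 y with hA
  set a := d 0 1 A with ha
  have hA0 : d 0 0 A = y := h.face_coface_eq 0 0 (by omega) y
  -- faces of B := δ 1 1 A
  have hB0 : d 1 0 (δ 1 1 A) = A := by
    have := h.face_coface_lt 0 0 0 le_rfl (by omega) A
    rw [this, hA0]
  have hB2 : d 1 2 (δ 1 1 A) = δ 0 1 a := by
    have := h.face_coface_gt 0 1 1 le_rfl (by omega) A
    rw [this]
  have F1 : d 0 0 (δ 0 1 a) = a := by
    have ff := h.face_face 0 0 1 (by omega) (by omega) (δ 1 1 A)
    rw [hB2, hB0] at ff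
    exact ff
  have F2 : d 0 1 (δ 0 1 a) = a := h.face_coface_eq 0 1 (by omega) a
  -- faces of E := δ 1 2 A
  have hE0 : d 1 0 (δ 1 2 A) = δ 0 1 y := by
    have := h.face_coface_lt 0 1 0 (by omega) (by omega) A
    rw [this, hA0]
  have hE1 : d 1 1 (δ 1 2 A) = δ 0 1 a := by
    have := h.face_coface_lt 0 1 1 le_rfl (by omega) A
    rw [this]
  have F3 : d 0 0 (δ 0 1 y) = a := by
    have ff := h.face_face 0 0 0 le_rfl (by omega) (δ 1 2 A)
    rw [hE1, hE0, F1] at ff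
    exact ff.symm
  have hA'1 : d 0 1 (δ 0 1 y) = y := h.face_coface_eq 0 1 (by omega) y
  refine ⟨A * (δ 0 1 a)⁻¹ * δ 0 1 y, ?_, ?_⟩
  · rw [map_mul, map_mul, map_inv, hA0, F1, F3]
    group
  · rw [map_mul, map_mul, map_inv, ← ha, F2, hA'1]
    group

/-- Step-by-step filling: if all faces of `Y : G (p+1)` coincide, then for each `k` there
is `ξ : G (p+2)` whose faces of index `< k` all equal `Y`, while the remaining faces are
all equal to each other. -/
lemma fill_aux (h : IsWeakBiDelta G d δ) (p : ℕ) (Y : G (p + 1))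
    (hY : ∀ j, j ≤ p + 1 → d p j Y = d p 0 Y) :
    ∀ k : ℕ, ∃ ξ : G (p + 2),
      (∀ j, j < k → j ≤ p + 2 → d (p + 1) j ξ = Y) ∧
      (∀ j, k ≤ j → j ≤ p + 2 → d (p + 1) j ξ = d (p + 1) (p + 2) ξ) := by
  -- the fourth-face transfer identity: faces of the "last face" of ξ
  have iv : ∀ (ξ : G (p + 2)) (j : ℕ), j ≤ p + 1 →
      d p j (d (p + 1) (p + 2) ξ) = d p (p + 1) (d (p + 1) j ξ) := by
    intro ξ j hj
    exact h.face_face p j (p + 1) hj le_rfl ξ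
  intro k
  induction k with
  | zero =>
    exact ⟨1, fun j hj _ => absurd hj (Nat.not_lt_zero j),
      fun j _ _ => by simp⟩
  | succ k ih =>
    obtain ⟨ξ, h1, h2⟩ := ih
    by_cases hk : k ≤ p + 2
    · set c := d (p + 1) (p + 2) ξ with hc
      set ξ' := ξ * (δ (p + 1) k c)⁻¹ * δ (p + 1) k Y with hξ'
      -- the common value of faces of index > k of ξ'
      have tail : ∀ j', k ≤ j' → j' ≤ p + 1 →
          d (p + 1) (j' + 1) ξ' = c * (δ p k (d p (p + 1) c))⁻¹ * δ p k (d p 0 Y) := by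
        intro j' hkj hj'
        have gt1 : d (p + 1) (j' + 1) (δ (p + 1) k c) = δ p k (d p j' c) :=
          h.face_coface_gt p k j' hkj hj' c
        have gt2 : d (p + 1) (j' + 1) (δ (p + 1) k Y) = δ p k (d p j' Y) :=
          h.face_coface_gt p k j' hkj hj' Y
        have hcj : d p j' c = d p (p + 1) c := by
          rw [hc, iv ξ j' hj', h2 j' hkj (by omega)]
        have hface : d (p + 1) (j' + 1) ξ = c := h2 (j' + 1) (by omega) (by omega)
        rw [hξ', map_mul, map_mul, map_inv, gt1, gt2, hface, hcj, hY j' hj']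
      refine ⟨ξ', ?_, ?_⟩
      · intro j hj hjp
        rcases Nat.lt_or_ge j k with hjk | hjk
        · -- j < k : use the `lt` coface identity
          obtain ⟨i, rfl⟩ : ∃ i, k = i + 1 := ⟨k - 1, by omega⟩
          have lt1 : d (p + 1) j (δ (p + 1) (i + 1) c) = δ p i (d p j c) :=
            h.face_coface_lt p i j (by omega) (by omega) c
          have lt2 : d (p + 1) j (δ (p + 1) (i + 1) Y) = δ p i (d p j Y) :=
            h.face_coface_lt p i j (by omega) (by omega) Y
          have hcj : d p j c = d p 0 Y := by
            rw [hc, iv ξ j (by omega), h1 j hjk (by omega), hY (p + 1) le_rfl]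
          have hface : d (p + 1) j ξ = Y := h1 j hjk (by omega)
          rw [hξ', map_mul, map_mul, map_inv, lt1, lt2, hface, hcj, hY j (by omega)]
          group
        · -- j = k
          have hjk' : j = k := by omega
          subst hjk'
          have eq1 : d (p + 1) j (δ (p + 1) j c) = c := h.face_coface_eq (p + 1) j hjp c
          have eq2 : d (p + 1) j (δ (p + 1) j Y) = Y := h.face_coface_eq (p + 1) j hjp Y
          have hface : d (p + 1) j ξ = c := h2 j le_rfl hjp
          rw [hξ', map_mul, map_mul, map_inv, eq1, eq2, hface]
          group
      · intro j hj hjp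
        obtain ⟨j', rfl⟩ : ∃ j'', j = j'' + 1 := ⟨j - 1, by omega⟩
        have hlast : d (p + 1) (p + 2) ξ' =
            c * (δ p k (d p (p + 1) c))⁻¹ * δ p k (d p 0 Y) :=
          tail (p + 1) (by omega) le_rfl
        rw [tail j' (by omega) (by omega), hlast]
    · exact ⟨ξ, fun j hj hjp => h1 j (by omega) hjp,
        fun j hj hjp => h2 j (by omega) hjp⟩

/-- Filling: if all faces of `Y : G (p+1)` coincide, then there is `ξ : G (p+2)` all of
whose faces equal `Y`. -/
lemma fill (h : IsWeakBiDelta G d δ) (p : ℕ) (Y : G (p + 1))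
    (hY : ∀ j, j ≤ p + 1 → d p j Y = d p 0 Y) :
    ∃ ξ : G (p + 2), ∀ j, j ≤ p + 2 → d (p + 1) j ξ = Y := by
  obtain ⟨ξ, h1, _⟩ := fill_aux h p Y hY (p + 3)
  exact ⟨ξ, fun j hj => h1 j (by omega) hj⟩

end Aux

/-- Let `G` be a weak bi-Δ-group. For every `n ≥ 1` (here `n = m + 1`)
and `x ∈ 𝔥_n G`, the element `d_0 x` lies in `𝔥_{n-1} G`; the resulting map
`p_n : 𝔥_n G → 𝔥_{n-1} G`, `x ↦ d_0 x`, is a group homomorphism and is surjective;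
and its kernel is exactly the Moore cycle group `Z_n G = ⋂_{j=0}^n ker d_j`. -/
theorem stmt3 (G : ℕ → Type u) [∀ n, Group (G n)]
    (d : ∀ n : ℕ, ℕ → (G (n + 1) →* G n)) (δ : ∀ n : ℕ, ℕ → (G n → G (n + 1)))
    (h : IsWeakBiDelta G d δ) (m : ℕ) :
    (∀ x ∈ cohenSet G d (m + 1), d m 0 x ∈ cohenSet G d m) ∧
    (∀ x ∈ cohenSet G d (m + 1), ∀ y ∈ cohenSet G d (m + 1),
      d m 0 (x * y) = d m 0 x * d m 0 y) ∧
    (∀ y ∈ cohenSet G d m, ∃ x ∈ cohenSet G d (m + 1), d m 0 x = y) ∧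
    ∀ x ∈ cohenSet G d (m + 1), (d m 0 x = 1 ↔ ∀ j, j ≤ m + 1 → d m j x = 1) := by
  refine ⟨?_, ?_, ?_, ?_⟩
  · -- d_0 maps 𝔥_{m+1} into 𝔥_m
    intro x hx
    match m with
    | 0 => simp [cohenSet]
    | k + 1 =>
      simp only [cohenSet, Set.mem_setOf_eq] at hx ⊢
      intro j hj
      have ff := h.face_face k 0 j (Nat.zero_le j) hj x
      rw [hx (j + 1) (by omega)] at ff
      exact ff.symm
  · -- homomorphism
    intro x _ y _
    exact map_mul _ x y
  · -- surjectivity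
    intro y hy
    match m with
    | 0 =>
      obtain ⟨x, hx0, hx1⟩ := fill0 h y
      refine ⟨x, ?_, hx0⟩
      simp only [cohenSet, Set.mem_setOf_eq]
      intro j hj
      interval_cases j
      · rfl
      · rw [hx1, hx0]
    | p + 1 =>
      simp only [cohenSet, Set.mem_setOf_eq] at hy
      obtain ⟨ξ, hξ⟩ := fill h p y hy
      refine ⟨ξ, ?_, hξ 0 (by omega)⟩
      simp only [cohenSet, Set.mem_setOf_eq]
      intro j hj
      rw [hξ j hj, hξ 0 (by omega)]
  · -- kernel is the Moore cycle group
    intro x hx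
    simp only [cohenSet, Set.mem_setOf_eq] at hx
    constructor
    · intro h0 j hj
      rw [hx j hj, h0]
    · intro hall
      exact hall 0 (by omega)
end

section
/- Second James–Hopf identity: let G be an abelian bi-Δ-group and k ≤ n ≤ m. Then H_{n,m} ∘ H_{k,n} = C(m−k, m−n) · H_{k,m} as group homomorphisms G_k → G_m, where C(m−k, m−n) is the binomial coefficient. -/
universe u

section

variable (G : ℕ → Type u) [∀ n, AddCommGroup (G n)]
variable (d : ∀ n : ℕ, ℕ → (G (n + 1) →+ G n))
variable (δ : ∀ n : ℕ, ℕ → (G n →+ G (n + 1)))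

/-- The axioms of an (abelian, additively written) bi-Δ-group: a sequence of groups `G n`
with faces `d n j : G (n+1) →+ G n` (for `j ≤ n+1`) and cofaces
`δ n i : G n →+ G (n+1)` (for `i ≤ n+1`), satisfying the simplicial-type identities. -/
structure IsBiDelta : Prop where
  face_face : ∀ n i j : ℕ, i ≤ j → j ≤ n + 1 → ∀ x : G (n + 2),
    d n i (d (n + 1) (j + 1) x) = d n j (d (n + 1) i x)
  coface_coface : ∀ n i j : ℕ, j ≤ i → i ≤ n + 1 → ∀ x : G n,
    δ (n + 1) j (δ n i x) = δ (n + 1) (i + 1) (δ n j x)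
  face_coface_lt : ∀ n i j : ℕ, j ≤ i → i ≤ n + 1 → ∀ x : G (n + 1),
    d (n + 1) j (δ (n + 1) (i + 1) x) = δ n i (d n j x)
  face_coface_eq : ∀ n i : ℕ, i ≤ n + 1 → ∀ x : G n, d n i (δ n i x) = x
  face_coface_gt : ∀ n i j : ℕ, i ≤ j → j ≤ n + 1 → ∀ x : G (n + 1),
    d (n + 1) (j + 1) (δ (n + 1) i x) = δ n i (d n j x)

/-- The `n`-th Cohen group `𝔥_n G = {x ∈ G_n : d_0 x = d_1 x = ⋯ = d_n x}`
(with `𝔥_0 G = G_0`), as a subgroup of `G n`. -/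
def cohenAll : ∀ n : ℕ, AddSubgroup (G n)
  | 0 => ⊤
  | m + 1 =>
    { carrier := { x : G (m + 1) | ∀ j, j ≤ m + 1 → d m j x = d m 0 x }
      add_mem' := fun {a b} ha hb j hj => by
        simp only [Set.mem_setOf_eq] at ha hb ⊢
        rw [map_add, map_add, ha j hj, hb j hj]
      zero_mem' := fun j hj => by simp
      neg_mem' := fun {a} ha j hj => by
        simp only [Set.mem_setOf_eq] at ha ⊢
        rw [map_neg, map_neg, ha j hj] }

/-- The `n`-th Moore cycle group `Z_n G = ⋂_{j=0}^n ker d_j` (with `Z_0 G = G_0`),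
as a subgroup of `G n`. -/
def mooreAll : ∀ n : ℕ, AddSubgroup (G n)
  | 0 => ⊤
  | m + 1 =>
    { carrier := { x : G (m + 1) | ∀ j, j ≤ m + 1 → d m j x = 0 }
      add_mem' := fun {a b} ha hb j hj => by
        simp only [Set.mem_setOf_eq] at ha hb ⊢
        rw [map_add, ha j hj, hb j hj, add_zero]
      zero_mem' := fun j hj => by simp
      neg_mem' := fun {a} ha j hj => by
        simp only [Set.mem_setOf_eq] at ha ⊢
        rw [map_neg, ha j hj, neg_zero] }

/-- Iterated cofaces `d^{c(r-1)} d^{c(r-2)} ⋯ d^{c(0)}(x)` along a tuple `c` of coface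
indices (`c 0` is applied first, at level `k`). -/
def iterCoface (k : ℕ) : ∀ r : ℕ, (Fin r → ℕ) → G k → G (k + r)
  | 0, _, x => x
  | r + 1, c, x => δ (k + r) (c (Fin.last r)) (iterCoface k r (fun i => c i.castSucc) x)

open Classical in
/-- The James–Hopf homomorphism `H_{k,n} : G_k → G_n` (`n = k + r`): the sum, over all
strictly increasing tuples `0 ≤ i_1 < i_2 < ⋯ < i_{n-k} ≤ n`, of
`d^{i_{n-k}} d^{i_{n-k-1}} ⋯ d^{i_1}(x)`. -/
noncomputable def jamesHopf (k r : ℕ) (x : G k) : G (k + r) :=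
  ∑ c ∈ Finset.univ.filter (fun c : Fin r → Fin (k + r + 1) => StrictMono c),
    iterCoface G δ k r (fun i => (c i : ℕ)) x

/-- `σ_{m+1} = H_{m,m+1} = Σ_{i=0}^{m+1} d^i : G m →+ G (m+1)` (as a function). -/
def sigmaMap (m : ℕ) (x : G m) : G (m + 1) :=
  ∑ i ∈ Finset.range (m + 2), δ m i x

/-- The composite `σ_{s+r} ∘ σ_{s+r-1} ∘ ⋯ ∘ σ_{s+1} : G s → G (s+r)`. -/
def sigmaIter (s : ℕ) : ∀ r : ℕ, G s → G (s + r)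
  | 0, x => x
  | r + 1, x => sigmaMap G δ (s + r) (sigmaIter s r x)

/-- The `r`-fold iterate of the zeroth face `d_0 : G (m+r) → G m`,
i.e. `p_{m+1} ∘ p_{m+2} ∘ ⋯ ∘ p_{m+r}` on Cohen groups. -/
def dIter (m : ℕ) : ∀ r : ℕ, G (m + r) → G m
  | 0, x => x
  | r + 1, x => dIter m r (d (m + r) 0 x)

end

namespace Stmt8Aux

/-- Insert `t` into a strictly decreasing list, shifting entries `≥ t` up by one. -/
def ins (t : ℕ) : List ℕ → List ℕ
  | [] => [t]
  | a :: l => if t ≤ a then (a + 1) :: ins t l else t :: a :: l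

def insList : List ℕ → List ℕ → List ℕ
  | [], l => l
  | t :: m, l => ins t (insList m l)

def deins (t : ℕ) : List ℕ → List ℕ
  | [] => []
  | a :: l => if t < a then (a - 1) :: deins t l else l

def deinsList : List ℕ → List ℕ → List ℕ
  | [], L => L
  | t :: m, L => deinsList m (deins t L)

/-- Validity of a decreasing coface-index list based at level `k`. -/
def Q (k : ℕ) (l : List ℕ) : Prop := l.Pairwise (· > ·) ∧ ∀ a ∈ l, a ≤ k + l.length

/-- Membership predicate for `DL k r`. -/
def P (k r : ℕ) (L : List ℕ) : Prop :=
  L.length = r ∧ L.Pairwise (· > ·) ∧ ∀ a ∈ L, a ≤ k + r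

@[simp] theorem length_ins (t : ℕ) : ∀ l : List ℕ, (ins t l).length = l.length + 1
  | [] => rfl
  | a :: l => by
    rw [ins]; split_ifs <;> simp [length_ins t l]

@[simp] theorem length_insList : ∀ m l : List ℕ, (insList m l).length = l.length + m.length
  | [], l => rfl
  | t :: m, l => by
    rw [insList, length_ins, length_insList m l, List.length_cons]; omega

theorem self_mem_ins (t : ℕ) : ∀ l : List ℕ, t ∈ ins t l
  | [] => List.mem_singleton_self t
  | a :: l => by
    rw [ins]; split_ifs with hd
    · exact List.mem_cons_of_mem _ (self_mem_ins t l)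
    · exact List.mem_cons_self

theorem mem_ins_of_lt {b t : ℕ} : ∀ {l : List ℕ}, b ∈ l → b < t → b ∈ ins t l
  | [], hb, _ => absurd hb (List.not_mem_nil)
  | a :: l, hb, hbt => by
    rw [ins]; split_ifs with hd
    · rcases List.mem_cons.mp hb with rfl | hb'
      · omega
      · exact List.mem_cons_of_mem _ (mem_ins_of_lt hb' hbt)
    · exact List.mem_cons_of_mem _ hb

theorem bnd_ins {a t : ℕ} : ∀ {l : List ℕ}, (∀ c ∈ l, c < a) → t ≤ a →
    ∀ b ∈ ins t l, b ≤ a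
  | [], _, ht, b, hb => by
    rw [ins, List.mem_singleton] at hb; omega
  | c :: l, hl, ht, b, hb => by
    rw [ins] at hb; split_ifs at hb with hd
    · rcases List.mem_cons.mp hb with rfl | hb'
      · have := hl c (List.mem_cons_self); omega
      · exact bnd_ins (fun x hx => hl x (List.mem_cons_of_mem _ hx)) ht b hb'
    · rcases List.mem_cons.mp hb with rfl | hb'
      · omega
      · exact le_of_lt (lt_of_lt_of_le (hl b hb') (le_refl a)) |>.trans (le_refl a) |>.trans (le_refl a) |>.trans (by omega)

theorem mem_ins_cases {b t : ℕ} : ∀ {l : List ℕ}, b ∈ ins t l →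
    b = t ∨ b ∈ l ∨ ∃ a ∈ l, b = a + 1
  | [], hb => by rw [ins, List.mem_singleton] at hb; exact Or.inl hb
  | a :: l, hb => by
    rw [ins] at hb; split_ifs at hb with hd
    · rcases List.mem_cons.mp hb with rfl | hb'
      · exact Or.inr (Or.inr ⟨a, List.mem_cons_self, rfl⟩)
      · rcases mem_ins_cases hb' with h1 | h2 | ⟨c, hc, rfl⟩
        · exact Or.inl h1
        · exact Or.inr (Or.inl (List.mem_cons_of_mem _ h2))
        · exact Or.inr (Or.inr ⟨c, List.mem_cons_of_mem _ hc, rfl⟩)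
    · rcases List.mem_cons.mp hb with rfl | hb'
      · exact Or.inl rfl
      · exact Or.inr (Or.inl hb')

theorem pairwise_ins (t : ℕ) : ∀ {l : List ℕ}, l.Pairwise (· > ·) →
    (ins t l).Pairwise (· > ·)
  | [], _ => List.pairwise_singleton _ _
  | a :: l, hl => by
    rw [List.pairwise_cons] at hl
    rw [ins]; split_ifs with hd
    · rw [List.pairwise_cons]
      exact ⟨fun b hb => lt_of_le_of_lt (bnd_ins hl.1 hd b hb) (Nat.lt_succ_self a),
        pairwise_ins t hl.2⟩
    · rw [List.pairwise_cons]
      refine ⟨fun b hb => ?_, List.pairwise_cons.mpr hl⟩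
      rcases List.mem_cons.mp hb with rfl | hb'
      · omega
      · have := hl.1 b hb'; omega

theorem Q_tail {k a : ℕ} {l : List ℕ} (h : Q k (a :: l)) : Q k l := by
  obtain ⟨hp, hb⟩ := h
  rw [List.pairwise_cons] at hp
  refine ⟨hp.2, fun b hb' => ?_⟩
  have h1 := hp.1 b hb'
  have h2 := hb a (List.mem_cons_self)
  simp only [List.length_cons] at h2
  omega

theorem Q_ins {k t : ℕ} {l : List ℕ} (hQ : Q k l) (ht : t ≤ k + l.length + 1) :
    Q k (ins t l) := by
  refine ⟨pairwise_ins t hQ.1, fun b hb => ?_⟩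
  rw [length_ins]
  rcases mem_ins_cases hb with rfl | h2 | ⟨a, ha, rfl⟩
  · omega
  · have := hQ.2 b h2; omega
  · have := hQ.2 a ha; omega

theorem Q_insList {k : ℕ} : ∀ {m l : List ℕ}, Q k l → Q (k + l.length) m →
    Q k (insList m l)
  | [], l, hl, _ => hl
  | t :: m, l, hl, hm => by
    rw [insList]
    have hm' : Q (k + l.length) m := Q_tail hm
    refine Q_ins (Q_insList hl hm') ?_
    have := hm.2 t (List.mem_cons_self)
    simp only [List.length_cons] at this
    rw [length_insList]
    omega

theorem deins_ins (t : ℕ) : ∀ l : List ℕ, deins t (ins t l) = l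
  | [] => by rw [ins, deins, if_neg (lt_irrefl t)]
  | a :: l => by
    rw [ins]; split_ifs with hd
    · rw [deins, if_pos (by omega), Nat.add_sub_cancel, deins_ins t l]
    · rw [deins, if_neg (lt_irrefl t)]

theorem deinsList_insList : ∀ m l : List ℕ, deinsList m (insList m l) = l
  | [], l => rfl
  | t :: m, l => by rw [insList, deinsList, deins_ins, deinsList_insList m l]

theorem ins_of_forall_lt {t : ℕ} : ∀ {l : List ℕ}, (∀ b ∈ l, b < t) → ins t l = t :: l
  | [], _ => rfl
  | a :: l, h => by
    rw [ins, if_neg]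
    have := h a (List.mem_cons_self); omega

theorem ins_deins {t : ℕ} : ∀ {l : List ℕ}, l.Pairwise (· > ·) → t ∈ l →
    ins t (deins t l) = l
  | [], _, ht => absurd ht (List.not_mem_nil)
  | a :: l, hp, ht => by
    rw [List.pairwise_cons] at hp
    rcases Nat.lt_trichotomy t a with h1 | rfl | h3
    · rw [deins, if_pos h1, ins, if_pos (by omega)]
      have ha : a - 1 + 1 = a := by omega
      rw [ha, ins_deins hp.2 ?_]
      rcases List.mem_cons.mp ht with rfl | ht'
      · omega
      · exact ht'
    · rw [deins, if_neg (lt_irrefl t), ins_of_forall_lt hp.1]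
    · exfalso
      rcases List.mem_cons.mp ht with rfl | ht'
      · omega
      · have := hp.1 t ht'; omega

theorem mem_deins_cases {e t : ℕ} : ∀ {l : List ℕ}, l.Pairwise (· > ·) → e ∈ deins t l →
    (e ∈ l ∧ e < t) ∨ (e + 1 ∈ l ∧ t ≤ e)
  | [], _, he => absurd he (List.not_mem_nil)
  | a :: l, hp, he => by
    rw [List.pairwise_cons] at hp
    rw [deins] at he; split_ifs at he with hd
    · rcases List.mem_cons.mp he with rfl | he'
      · right; constructor
        · have : a - 1 + 1 = a := by omega
          rw [this]; exact List.mem_cons_self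
        · omega
      · rcases mem_deins_cases hp.2 he' with ⟨h1, h2⟩ | ⟨h1, h2⟩
        · exact Or.inl ⟨List.mem_cons_of_mem _ h1, h2⟩
        · exact Or.inr ⟨List.mem_cons_of_mem _ h1, h2⟩
    · left
      refine ⟨List.mem_cons_of_mem _ he, ?_⟩
      have := hp.1 e he; omega

theorem mem_deins_of_lt {b t : ℕ} : ∀ {l : List ℕ}, l.Pairwise (· > ·) → t ∈ l →
    b ∈ l → b < t → b ∈ deins t l
  | [], _, ht, _, _ => absurd ht (List.not_mem_nil)
  | a :: l, hp, ht, hb, hbt => by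
    rw [List.pairwise_cons] at hp
    rw [deins]; split_ifs with hd
    · rcases List.mem_cons.mp hb with rfl | hb'
      · omega
      · refine List.mem_cons_of_mem _ (mem_deins_of_lt hp.2 ?_ hb' hbt)
        rcases List.mem_cons.mp ht with rfl | ht'
        · omega
        · exact ht'
    · rcases List.mem_cons.mp hb with rfl | hb'
      · exfalso
        rcases List.mem_cons.mp ht with rfl | ht'
        · omega
        · have := hp.1 t ht'; omega
      · exact hb'

theorem pairwise_deins (t : ℕ) : ∀ {l : List ℕ}, l.Pairwise (· > ·) →
    (deins t l).Pairwise (· > ·)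
  | [], _ => List.Pairwise.nil
  | a :: l, hp => by
    rw [List.pairwise_cons] at hp
    rw [deins]; split_ifs with hd
    · rw [List.pairwise_cons]
      refine ⟨fun e he => ?_, pairwise_deins t hp.2⟩
      rcases mem_deins_cases hp.2 he with ⟨h1, h2⟩ | ⟨h1, h2⟩
      · omega
      · have := hp.1 _ h1; omega
    · exact hp.2

theorem length_deins {t : ℕ} : ∀ {l : List ℕ}, l.Pairwise (· > ·) → t ∈ l →
    (deins t l).length + 1 = l.length
  | [], _, ht => absurd ht (List.not_mem_nil)
  | a :: l, hp, ht => by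
    rw [List.pairwise_cons] at hp
    rw [deins]; split_ifs with hd
    · simp only [List.length_cons]
      rw [length_deins hp.2 ?_]
      rcases List.mem_cons.mp ht with rfl | ht'
      · omega
      · exact ht'
    · rfl

theorem P_deins {k r t : ℕ} {L : List ℕ} (hP : P k (r + 1) L) (ht : t ∈ L) :
    P k r (deins t L) := by
  obtain ⟨hlen, hp, hb⟩ := hP
  refine ⟨?_, pairwise_deins t hp, fun e he => ?_⟩
  · have := length_deins hp ht; omega
  · have htb := hb t ht
    rcases mem_deins_cases hp he with ⟨h1, h2⟩ | ⟨h1, h2⟩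
    · omega
    · have := hb _ h1; omega

theorem P_deinsList {k r : ℕ} : ∀ {m L : List ℕ}, P k (r + m.length) L →
    m.Pairwise (· > ·) → (∀ t ∈ m, t ∈ L) → P k r (deinsList m L)
  | [], L, hP, _, _ => hP
  | t :: m, L, hP, hm, hmem => by
    rw [List.pairwise_cons] at hm
    rw [deinsList]
    refine P_deinsList (P_deins hP (hmem t (List.mem_cons_self))) hm.2 fun t' ht' => ?_
    exact mem_deins_of_lt hP.2.1 (hmem t (List.mem_cons_self))
      (hmem t' (List.mem_cons_of_mem _ ht')) (hm.1 t' ht')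

theorem insList_deinsList : ∀ {m L : List ℕ}, m.Pairwise (· > ·) → L.Pairwise (· > ·) →
    (∀ t ∈ m, t ∈ L) → insList m (deinsList m L) = L
  | [], L, _, _, _ => rfl
  | t :: m, L, hm, hL, hmem => by
    rw [List.pairwise_cons] at hm
    rw [insList, deinsList]
    rw [insList_deinsList hm.2 (pairwise_deins t hL) fun t' ht' =>
      mem_deins_of_lt hL (hmem t (List.mem_cons_self))
        (hmem t' (List.mem_cons_of_mem _ ht')) (hm.1 t' ht')]
    exact ins_deins hL (hmem t (List.mem_cons_self))

theorem subset_insList {l : List ℕ} : ∀ {m : List ℕ}, m.Pairwise (· > ·) →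
    ∀ b ∈ m, b ∈ insList m l
  | [], _, b, hb => absurd hb (List.not_mem_nil)
  | t :: m, hm, b, hb => by
    rw [List.pairwise_cons] at hm
    rw [insList]
    rcases List.mem_cons.mp hb with rfl | hb'
    · exact self_mem_ins b _
    · exact mem_ins_of_lt (subset_insList hm.2 b hb') (hm.1 b hb')


variable {G : ℕ → Type u} [∀ n, AddCommGroup (G n)]
variable {d : ∀ n : ℕ, ℕ → (G (n + 1) →+ G n)}
variable (δ : ∀ n : ℕ, ℕ → (G n →+ G (n + 1)))

/-- Transport along an equality of indices, as an additive equivalence. -/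
def trE (G : ℕ → Type u) [∀ n, AddCommGroup (G n)] {a b : ℕ} (h : a = b) : G a ≃+ G b :=
  h ▸ AddEquiv.refl (G a)

theorem trE_heq {a b : ℕ} (h : a = b) (x : G a) : HEq (trE G h x) x := by
  subst h; exact HEq.rfl

theorem trE_cast {a b : ℕ} (h : a = b) (x : G a) :
    trE G h x = cast (congrArg G h) x := by subst h; rfl

/-- Iterated cofaces along a (decreasing) list, outermost coface first in the list. -/
def lcHom (k : ℕ) : (l : List ℕ) → (G k →+ G (k + l.length))
  | [] => AddMonoidHom.id _
  | a :: l => (δ (k + l.length) a).comp (lcHom k l)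

theorem heq_δ {a b : ℕ} (hab : a = b) (i : ℕ) {x : G a} {y : G b} (hxy : HEq x y) :
    HEq (δ a i x) (δ b i y) := by
  subst hab; exact heq_of_eq (by rw [eq_of_heq hxy])

theorem lcHom_heq {a b : ℕ} (hab : a = b) (m : List ℕ) {x : G a} {y : G b}
    (hxy : HEq x y) : HEq (lcHom δ a m x) (lcHom δ b m y) := by
  subst hab; exact heq_of_eq (by rw [eq_of_heq hxy])

theorem push (h : IsBiDelta G d δ) (k t : ℕ) (x : G k) (l : List ℕ) (hQ : Q k l)
    (ht : t ≤ k + l.length + 1) :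
    HEq (δ (k + l.length) t (lcHom δ k l x)) (lcHom δ k (ins t l) x) := by
  induction l with
  | nil => exact HEq.rfl
  | cons a l ih =>
    have hQl := Q_tail hQ
    have ha : a ≤ k + l.length + 1 := by
      have := hQ.2 a (List.mem_cons_self)
      simp only [List.length_cons] at this; omega
    have ht' : t ≤ k + l.length + 1 + 1 := by
      simp only [List.length_cons] at ht; omega
    by_cases hta : t ≤ a
    · have key := h.coface_coface (k + l.length) a t hta ha (lcHom δ k l x)
      rw [show ins t (a :: l) = (a + 1) :: ins t l by rw [ins, if_pos hta]]
      show HEq (δ (k + l.length + 1) t (δ (k + l.length) a (lcHom δ k l x)))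
        (lcHom δ k ((a + 1) :: ins t l) x)
      rw [key]
      exact heq_δ δ (by rw [length_ins]; omega) (a + 1) (ih hQl (by omega))
    · rw [show ins t (a :: l) = t :: a :: l by rw [ins, if_neg hta]]
      exact HEq.rfl

theorem push_many (h : IsBiDelta G d δ) (k : ℕ) (x : G k) (m l : List ℕ) (hQl : Q k l)
    (hQm : Q (k + l.length) m) :
    HEq (lcHom δ (k + l.length) m (lcHom δ k l x)) (lcHom δ k (insList m l) x) := by
  induction m with
  | nil => exact HEq.rfl
  | cons t m ih =>
    have hQm' : Q (k + l.length) m := Q_tail hQm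
    have ht : t ≤ k + l.length + m.length + 1 := by
      have := hQm.2 t (List.mem_cons_self)
      simp only [List.length_cons] at this; omega
    show HEq (δ (k + l.length + m.length) t
      (lcHom δ (k + l.length) m (lcHom δ k l x))) (lcHom δ k (ins t (insList m l)) x)
    refine HEq.trans (heq_δ δ (by rw [length_insList]; omega) t (ih hQm')) ?_
    exact push δ h k t x (insList m l) (Q_insList hQl hQm') (by rw [length_insList]; omega)

/-- `lcHom` adjusted to land in `G (k + r)`, given the list has length `r` (else `0`). -/
def lcF (k r : ℕ) (l : List ℕ) : G k →+ G (k + r) :=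
  if h : l.length = r then
    ((trE G (congrArg (k + ·) h)).toAddMonoidHom).comp (lcHom δ k l)
  else 0

theorem lcF_heq {k r : ℕ} {l : List ℕ} (hl : l.length = r) (x : G k) :
    HEq (lcF δ k r l x) (lcHom δ k l x) := by
  rw [lcF, dif_pos hl]
  exact trE_heq _ _

theorem heq_iter (k : ℕ) (x : G k) (r : ℕ) (c : Fin r → ℕ) :
    HEq (iterCoface G δ k r c x) (lcHom δ k (List.ofFn c).reverse x) := by
  induction r with
  | zero =>
    rw [List.ofFn_zero, List.reverse_nil]
    exact HEq.rfl
  | succ r ih =>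
    rw [List.ofFn_succ']
    rw [show ((List.ofFn fun i => c i.castSucc).concat (c (Fin.last r))).reverse
        = c (Fin.last r) :: (List.ofFn fun i => c i.castSucc).reverse by
      rw [List.concat_eq_append, List.reverse_append]; rfl]
    show HEq (δ (k + r) (c (Fin.last r)) (iterCoface G δ k r (fun i => c i.castSucc) x)) _
    exact heq_δ δ (by simp) (c (Fin.last r)) (ih (fun i => c i.castSucc))

/-- The finset of strictly decreasing lists of length `r` with entries `≤ k + r`. -/
def DL (k r : ℕ) : Finset (List ℕ) :=
  ((Finset.range (k + r + 1)).powersetCard r).image fun S => (S.sort (· ≤ ·)).reverse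

theorem sort_eq {l : List ℕ} (hl : l.Pairwise (· > ·)) :
    l.toFinset.sort (· ≤ ·) = l.reverse := by
  have hnd : l.Nodup := hl.imp ne_of_gt
  refine (fun hp h2 => List.Perm.eq_of_pairwise' (Finset.pairwise_sort _ _) h2 hp) ?_ ?_
  · exact (Finset.sort_perm_toList _ _).trans
      ((List.toFinset_toList hnd).trans (List.reverse_perm l).symm)
  · exact List.pairwise_reverse.mpr (hl.imp le_of_lt)

theorem mem_DL {k r : ℕ} {L : List ℕ} : L ∈ DL k r ↔ P k r L := by
  constructor
  · intro hL
    rw [DL, Finset.mem_image] at hL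
    obtain ⟨S, hS, rfl⟩ := hL
    rw [Finset.mem_powersetCard] at hS
    refine ⟨by simp [hS.2], ?_, ?_⟩
    · exact List.pairwise_reverse.mpr ((Finset.sortedLT_sort S).pairwise)
    · intro a ha
      rw [List.mem_reverse, Finset.mem_sort] at ha
      have := hS.1 ha
      rw [Finset.mem_range] at this; omega
  · rintro ⟨hlen, hp, hb⟩
    rw [DL, Finset.mem_image]
    refine ⟨L.toFinset, ?_, ?_⟩
    · rw [Finset.mem_powersetCard]
      refine ⟨fun a ha => ?_, ?_⟩
      · rw [List.mem_toFinset] at ha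
        rw [Finset.mem_range]
        have := hb a ha; omega
      · rw [List.toFinset_card_of_nodup (hp.imp ne_of_gt), hlen]
    · rw [sort_eq hp, List.reverse_reverse]

section

variable {G : ℕ → Type u} [∀ n, AddCommGroup (G n)]
variable {d : ∀ n : ℕ, ℕ → (G (n + 1) →+ G n)}
variable (δ : ∀ n : ℕ, ℕ → (G n →+ G (n + 1)))

theorem jh_eq (k r : ℕ) (x : G k) :
    jamesHopf G δ k r x = ∑ l ∈ DL k r, lcF δ k r l x := by
  rw [jamesHopf]
  refine Finset.sum_nbij' (i := fun c : Fin r → Fin (k + r + 1) =>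
      (List.ofFn fun j => ((c j : ℕ))).reverse)
    (j := fun L => fun i : Fin r =>
      (⟨(L.reverse.getD i 0) % (k + r + 1), Nat.mod_lt _ (Nat.succ_pos _)⟩ : Fin (k + r + 1)))
    ?_ ?_ ?_ ?_ ?_
  · -- i maps into DL
    intro c hc
    rw [Finset.mem_filter] at hc
    rw [mem_DL]
    refine ⟨by simp, ?_, ?_⟩
    · refine List.pairwise_reverse.mpr ?_
      exact List.pairwise_ofFn.mpr fun i j hij => hc.2 hij
    · intro a ha
      rw [List.mem_reverse, List.mem_ofFn] at ha
      obtain ⟨j, rfl⟩ := ha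
      exact Nat.lt_succ_iff.mp (c j).isLt
  · -- j maps into the filter
    intro L hL
    obtain ⟨hlen, hp, hb⟩ := mem_DL.mp hL
    have hlenr : L.reverse.length = r := by simp [hlen]
    rw [Finset.mem_filter]
    refine ⟨Finset.mem_univ _, ?_⟩
    intro i1 i2 h12
    have hpr : L.reverse.Pairwise (· < ·) := List.pairwise_reverse.mpr hp
    have key := List.pairwise_iff_getElem.mp hpr i1 i2 (by omega) (by omega) h12
    have e1 : L.reverse.getD i1 0 = L.reverse[(i1 : ℕ)]'(by omega) := List.getD_eq_getElem _ _ _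
    have e2 : L.reverse.getD i2 0 = L.reverse[(i2 : ℕ)]'(by omega) := List.getD_eq_getElem _ _ _
    have m1 : L.reverse[(i1 : ℕ)]'(by omega) < k + r + 1 := by
      have : L.reverse[(i1 : ℕ)]'(by omega) ∈ L := by
        rw [← List.mem_reverse]; exact List.getElem_mem _
      have := hb _ this; omega
    have m2 : L.reverse[(i2 : ℕ)]'(by omega) < k + r + 1 := by
      have : L.reverse[(i2 : ℕ)]'(by omega) ∈ L := by
        rw [← List.mem_reverse]; exact List.getElem_mem _
      have := hb _ this; omega
    show (⟨(L.reverse.getD i1 0) % (k + r + 1), _⟩ : Fin (k + r + 1))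
      < ⟨(L.reverse.getD i2 0) % (k + r + 1), _⟩
    rw [Fin.mk_lt_mk, e1, e2, Nat.mod_eq_of_lt m1, Nat.mod_eq_of_lt m2]
    exact key
  · -- left inverse
    intro c _
    funext i
    apply Fin.ext
    simp only [List.reverse_reverse]
    have : (List.ofFn fun j => ((c j : ℕ))).getD i 0
        = (List.ofFn fun j => ((c j : ℕ)))[(i : ℕ)]'(by simp) :=
      List.getD_eq_getElem _ _ _
    rw [this]
    simp [Nat.mod_eq_of_lt (c i).isLt]
  · -- right inverse
    intro L hL
    obtain ⟨hlen, hp, hb⟩ := mem_DL.mp hL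
    have hlenr : L.reverse.length = r := by simp [hlen]
    rw [← List.reverse_inj, List.reverse_reverse]
    apply List.ext_getElem (by simp [hlen])
    intro n h1 h2
    rw [List.getElem_ofFn]
    show (L.reverse.getD n 0) % (k + r + 1) = _
    have hn : n < L.reverse.length := by simpa using h2
    rw [List.getD_eq_getElem _ _ hn]
    have : L.reverse[n] ∈ L := by rw [← List.mem_reverse]; exact List.getElem_mem _
    have := hb _ this
    rw [Nat.mod_eq_of_lt (by omega)]
  · -- values agree
    intro c _
    have h1 := heq_iter δ k x r (fun i => ((c i : ℕ)))
    have h2 := lcF_heq δ (l := (List.ofFn fun j => ((c j : ℕ))).reverse) (k := k) (r := r)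
      (by simp) x
    exact eq_of_heq (h1.trans h2.symm)

theorem Q_of_P {k r : ℕ} {l : List ℕ} (h : P k r l) : Q k l :=
  ⟨h.2.1, fun a ha => by have := h.2.2 a ha; rw [h.1]; omega⟩

theorem insList_P {k r s : ℕ} {m l : List ℕ} (hm : P (k + r) s m) (hl : P k r l) :
    P k (r + s) (insList m l) := by
  have hQl : Q k l := Q_of_P hl
  have hQm : Q (k + l.length) m := by
    refine ⟨hm.2.1, fun a ha => ?_⟩
    have := hm.2.2 a ha
    rw [hl.1, hm.1]; omega
  have hQ := Q_insList hQl hQm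
  refine ⟨by rw [length_insList, hl.1, hm.1], hQ.1, fun a ha => ?_⟩
  have := hQ.2 a ha
  rw [length_insList, hl.1, hm.1] at this
  omega

theorem lcF_comp (h : IsBiDelta G d δ) {k r s : ℕ} {m l : List ℕ}
    (hm : P (k + r) s m) (hl : P k r l) (x : G k) :
    lcF δ (k + r) s m (lcF δ k r l x)
      = trE G (Nat.add_assoc k r s).symm (lcF δ k (r + s) (insList m l) x) := by
  have hQl : Q k l := Q_of_P hl
  have hQm : Q (k + l.length) m := by
    refine ⟨hm.2.1, fun a ha => ?_⟩
    have := hm.2.2 a ha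
    rw [hl.1, hm.1]; omega
  have hlen : (insList m l).length = r + s := by rw [length_insList, hl.1, hm.1]
  have e1 : HEq (lcF δ k r l x) (lcHom δ k l x) := lcF_heq δ hl.1 x
  have e2 : HEq (lcF δ (k + r) s m (lcF δ k r l x)) (lcHom δ (k + r) m (lcF δ k r l x)) :=
    lcF_heq δ hm.1 _
  have e3 : HEq (lcHom δ (k + r) m (lcF δ k r l x))
      (lcHom δ (k + l.length) m (lcHom δ k l x)) :=
    lcHom_heq δ (by rw [hl.1]) m e1
  have H1 : HEq (lcF δ (k + r) s m (lcF δ k r l x)) (lcHom δ k (insList m l) x) :=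
    (e2.trans e3).trans (push_many δ h k x m l hQl hQm)
  have H2 : HEq (trE G (Nat.add_assoc k r s).symm (lcF δ k (r + s) (insList m l) x))
      (lcHom δ k (insList m l) x) :=
    (trE_heq _ _).trans (lcF_heq δ hlen x)
  exact eq_of_heq (H1.trans H2.symm)

theorem count {k r s : ℕ} {L : List ℕ} (hL : L ∈ DL k (r + s)) :
    (((DL (k + r) s ×ˢ DL k r).filter fun p => insList p.1 p.2 = L).card
      = (r + s).choose s) := by
  obtain ⟨hlen, hp, hb⟩ := mem_DL.mp hL
  have hnd : L.Nodup := hp.imp ne_of_gt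
  have hcard : L.toFinset.card = r + s := by
    rw [List.toFinset_card_of_nodup hnd, hlen]
  have := Finset.card_nbij' (s := ((DL (k + r) s ×ˢ DL k r).filter
      fun p => insList p.1 p.2 = L)) (t := L.toFinset.powersetCard s)
    (i := fun p => p.1.toFinset)
    (j := fun B => ((B.sort (· ≤ ·)).reverse, deinsList (B.sort (· ≤ ·)).reverse L))
    ?_ ?_ ?_ ?_
  · rw [this, Finset.card_powersetCard, hcard]
  · -- i maps to powersetCard
    intro p hp'
    simp only [Finset.mem_coe] at hp' ⊢
    rw [Finset.mem_filter, Finset.mem_product] at hp'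
    obtain ⟨⟨hm, hl⟩, hins⟩ := hp'
    obtain ⟨hmlen, hmp, hmb⟩ := mem_DL.mp hm
    rw [Finset.mem_powersetCard]
    constructor
    · intro b hb'
      rw [List.mem_toFinset] at hb'
      rw [List.mem_toFinset, ← hins]
      exact subset_insList hmp b hb'
    · rw [List.toFinset_card_of_nodup (hmp.imp ne_of_gt), hmlen]
  · -- j maps to the fiber
    intro B hB
    simp only [Finset.mem_coe] at hB ⊢
    rw [Finset.mem_powersetCard] at hB
    obtain ⟨hBsub, hBcard⟩ := hB
    set m' : List ℕ := (B.sort (· ≤ ·)).reverse with hm'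
    have hm'len : m'.length = s := by rw [hm', List.length_reverse, Finset.length_sort, hBcard]
    have hm'p : m'.Pairwise (· > ·) := List.pairwise_reverse.mpr ((Finset.sortedLT_sort B).pairwise)
    have hm'mem : ∀ t ∈ m', t ∈ L := by
      intro t ht
      rw [hm', List.mem_reverse, Finset.mem_sort] at ht
      rw [← List.mem_toFinset]
      exact hBsub ht
    have hPm' : P (k + r) s m' := by
      refine ⟨hm'len, hm'p, fun a ha => ?_⟩
      have := hb a (hm'mem a ha)
      omega
    have hPL : P k (r + m'.length) L := by rw [hm'len]; exact ⟨hlen, hp, hb⟩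
    have hPl' : P k r (deinsList m' L) := P_deinsList hPL hm'p hm'mem
    rw [Finset.mem_filter, Finset.mem_product]
    exact ⟨⟨mem_DL.mpr hPm', mem_DL.mpr hPl'⟩, insList_deinsList hm'p hp hm'mem⟩
  · -- left inverse
    intro p hp'
    simp only [Finset.mem_coe] at hp'
    rw [Finset.mem_filter, Finset.mem_product] at hp'
    obtain ⟨⟨hm, hl⟩, hins⟩ := hp'
    obtain ⟨hmlen, hmp, hmb⟩ := mem_DL.mp hm
    have h1 : (p.1.toFinset.sort (· ≤ ·)).reverse = p.1 := by
      rw [sort_eq hmp, List.reverse_reverse]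
    refine Prod.ext ?_ ?_
    · exact h1
    · show deinsList (p.1.toFinset.sort (· ≤ ·)).reverse L = p.2
      rw [h1, ← hins, deinsList_insList]
  · -- right inverse
    intro B hB
    show ((B.sort (· ≤ ·)).reverse).toFinset = B
    rw [List.toFinset_reverse, Finset.sort_toFinset]

end
end Stmt8Aux
/-- second James–Hopf identity. For an abelian bi-Δ-group `G` and
`k ≤ n ≤ m` (here `n = k + r`, `m = n + s = k + r + s`),
`H_{n,m} ∘ H_{k,n} = C(m-k, m-n) · H_{k,m}` as homomorphisms `G_k → G_m`;
note `m - k = r + s` and `m - n = s`. -/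
theorem stmt8 (G : ℕ → Type u) [∀ n, AddCommGroup (G n)]
    (d : ∀ n : ℕ, ℕ → (G (n + 1) →+ G n)) (δ : ∀ n : ℕ, ℕ → (G n →+ G (n + 1)))
    (h : IsBiDelta G d δ) (k r s : ℕ) (x : G k) :
    jamesHopf G δ (k + r) s (jamesHopf G δ k r x)
      = (r + s).choose s •
          cast (congrArg G (Nat.add_assoc k r s).symm) (jamesHopf G δ k (r + s) x) := by
  have hmaps : ∀ p ∈ (Stmt8Aux.DL (k + r) s ×ˢ Stmt8Aux.DL k r : Finset (List ℕ × List ℕ)),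
      Stmt8Aux.insList p.1 p.2 ∈ Stmt8Aux.DL k (r + s) := by
    intro p hp'
    rw [Finset.mem_product] at hp'
    exact Stmt8Aux.mem_DL.mpr
      (Stmt8Aux.insList_P (Stmt8Aux.mem_DL.mp hp'.1) (Stmt8Aux.mem_DL.mp hp'.2))
  calc jamesHopf G δ (k + r) s (jamesHopf G δ k r x)
      = ∑ m ∈ Stmt8Aux.DL (k + r) s, Stmt8Aux.lcF δ (k + r) s m (jamesHopf G δ k r x) :=
        Stmt8Aux.jh_eq δ (k + r) s _
    _ = ∑ m ∈ Stmt8Aux.DL (k + r) s, ∑ l ∈ Stmt8Aux.DL k r,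
          Stmt8Aux.lcF δ (k + r) s m (Stmt8Aux.lcF δ k r l x) := by
        refine Finset.sum_congr rfl fun m _ => ?_
        rw [Stmt8Aux.jh_eq δ k r x, map_sum]
    _ = ∑ m ∈ Stmt8Aux.DL (k + r) s, ∑ l ∈ Stmt8Aux.DL k r,
          Stmt8Aux.trE G (Nat.add_assoc k r s).symm
            (Stmt8Aux.lcF δ k (r + s) (Stmt8Aux.insList m l) x) := by
        refine Finset.sum_congr rfl fun m hm => Finset.sum_congr rfl fun l hl => ?_
        exact Stmt8Aux.lcF_comp δ h (Stmt8Aux.mem_DL.mp hm) (Stmt8Aux.mem_DL.mp hl) x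
    _ = Stmt8Aux.trE G (Nat.add_assoc k r s).symm
          (∑ p ∈ Stmt8Aux.DL (k + r) s ×ˢ Stmt8Aux.DL k r,
            Stmt8Aux.lcF δ k (r + s) (Stmt8Aux.insList p.1 p.2) x) := by
        rw [map_sum, Finset.sum_product]
    _ = Stmt8Aux.trE G (Nat.add_assoc k r s).symm
          (∑ L ∈ Stmt8Aux.DL k (r + s),
            ∑ p ∈ (Stmt8Aux.DL (k + r) s ×ˢ Stmt8Aux.DL k r).filter
              (fun p => Stmt8Aux.insList p.1 p.2 = L),
            Stmt8Aux.lcF δ k (r + s) (Stmt8Aux.insList p.1 p.2) x) := by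
        rw [Finset.sum_fiberwise_of_maps_to hmaps]
    _ = Stmt8Aux.trE G (Nat.add_assoc k r s).symm
          (∑ L ∈ Stmt8Aux.DL k (r + s), (r + s).choose s • Stmt8Aux.lcF δ k (r + s) L x) := by
        congr 1
        refine Finset.sum_congr rfl fun L hL => ?_
        rw [Finset.sum_congr rfl (fun p hp' => by
          rw [(Finset.mem_filter.mp hp').2]), Finset.sum_const, Stmt8Aux.count hL]
    _ = Stmt8Aux.trE G (Nat.add_assoc k r s).symm
          ((r + s).choose s • ∑ L ∈ Stmt8Aux.DL k (r + s), Stmt8Aux.lcF δ k (r + s) L x) := by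
        rw [Finset.smul_sum]
    _ = (r + s).choose s • Stmt8Aux.trE G (Nat.add_assoc k r s).symm
          (jamesHopf G δ k (r + s) x) := by
        rw [← Stmt8Aux.jh_eq, map_nsmul]
    _ = (r + s).choose s •
          cast (congrArg G (Nat.add_assoc k r s).symm) (jamesHopf G δ k (r + s) x) := by
        rw [Stmt8Aux.trE_cast]
end

section
/- Let G be an abelian bi-Δ-group and 0 ≤ s < n. Then σ_n ∘ σ_{n−1} ∘ ⋯ ∘ σ_{s+1} = (n−s)! · H_{s,n} as group homomorphisms G_s → G_n. In particular, for n ≤ m, H_{n,m} ∘ σ_n = (m−n+1) · H_{n−1,m} as homomorphisms G_{n−1} → G_m. -/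
universe u

section Aux

variable {G : ℕ → Type u} [∀ n, AddCommGroup (G n)]


variable {G : ℕ → Type u} [∀ n, AddCommGroup (G n)]

def bdCast (G : ℕ → Type u) [∀ n, AddCommGroup (G n)] {m n : ℕ} (h : m = n) :
    G m →+ G n := h ▸ AddMonoidHom.id (G m)

lemma bdCast_apply {m n : ℕ} (h : m = n) (x : G m) :
    bdCast G h x = cast (congrArg G h) x := by subst h; rfl

lemma bdCast_rfl {m : ℕ} (x : G m) : bdCast G rfl x = x := rfl

lemma bdCast_bdCast {m n p : ℕ} (h : m = n) (h' : n = p) (x : G m) :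
    bdCast G h' (bdCast G h x) = bdCast G (h.trans h') x := by subst h h'; rfl

lemma delta_bdCast (δ : ∀ n : ℕ, ℕ → (G n →+ G (n + 1))) {m n : ℕ} (h : m = n) (j : ℕ)
    (x : G m) : δ n j (bdCast G h x) = bdCast G (by omega : m + 1 = n + 1) (δ m j x) := by
  subst h; rfl

/-- first failure point -/
def pins (t i : ℕ) (f : ℕ → ℕ) : ℕ :=
  Nat.find (p := fun j => t ≤ j ∨ i + j < f j) ⟨t, Or.inl le_rfl⟩

lemma pins_le (t i : ℕ) (f : ℕ → ℕ) : pins t i f ≤ t :=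
  Nat.find_le (Or.inl le_rfl)

lemma pins_lt {t i : ℕ} {f : ℕ → ℕ} {k : ℕ} (hk : k < pins t i f) :
    k < t ∧ f k ≤ i + k := by
  have := Nat.find_min (p := fun j => t ≤ j ∨ i + j < f j) ⟨t, Or.inl le_rfl⟩ hk
  push_neg at this
  omega

lemma pins_spec (t i : ℕ) (f : ℕ → ℕ) :
    pins t i f = t ∨ (pins t i f < t ∧ i + pins t i f < f (pins t i f)) := by
  have h1 : t ≤ pins t i f ∨ i + pins t i f < f (pins t i f) :=
    Nat.find_spec (p := fun j => t ≤ j ∨ i + j < f j) ⟨t, Or.inl le_rfl⟩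
  have h2 := pins_le t i f
  rcases h1 with h | h
  · left; omega
  · rcases eq_or_lt_of_le h2 with h' | h'
    · left; exact h'
    · right; exact ⟨h', h⟩

lemma pins_eq {t i : ℕ} {f : ℕ → ℕ} {p : ℕ} (h1 : ∀ k, k < p → f k ≤ i + k ∧ k < t)
    (h2 : t ≤ p ∨ i + p < f p) : pins t i f = p := by
  refine le_antisymm (Nat.find_le h2) ?_
  by_contra hlt
  push_neg at hlt
  have hs := pins_spec t i f
  have hh := h1 _ hlt
  omega

def insF (f : ℕ → ℕ) (i p : ℕ) : ℕ → ℕ := fun m =>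
  if m < p then f m else if m = p then i + p else f (m - 1)

def delF (g : ℕ → ℕ) (p : ℕ) : ℕ → ℕ := fun m => if m < p then g m else g (m + 1)


variable {d : ∀ n : ℕ, ℕ → (G (n + 1) →+ G n)}
variable {δ : ∀ n : ℕ, ℕ → (G n →+ G (n + 1))}

lemma iterCoface_succ (δ : ∀ n : ℕ, ℕ → (G n →+ G (n + 1))) (k r : ℕ) (c : Fin (r+1) → ℕ)
    (x : G k) :
    iterCoface G δ k (r+1) c x
      = δ (k + r) (c (Fin.last r)) (iterCoface G δ k r (fun i => c i.castSucc) x) := rfl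

lemma iterCoface_sum (δ : ∀ n : ℕ, ℕ → (G n →+ G (n + 1))) (k r : ℕ) (c : Fin r → ℕ)
    {β : Type} (s : Finset β) (f : β → G k) :
    iterCoface G δ k r c (∑ b ∈ s, f b) = ∑ b ∈ s, iterCoface G δ k r c (f b) := by
  induction r with
  | zero => rfl
  | succ r ih => simp only [iterCoface_succ, ih, map_sum]

lemma bd_eq (a t : ℕ) : a + (t + 1) = a + 1 + t := by omega

lemma lemA (h : IsBiDelta G d δ) (a : ℕ) {i : ℕ} (hi : i ≤ a + 1) (t : ℕ) (f : ℕ → ℕ)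
    (x : G a) :
    iterCoface G δ (a+1) t (fun m : Fin t => f m) (δ a i x)
      = bdCast G (bd_eq a t)
          (iterCoface G δ a (t+1) (fun m : Fin (t+1) => insF f i (pins t i f) m) x) := by
  induction t with
  | zero =>
    have hp : pins 0 i f = 0 := Nat.le_zero.mp (pins_le 0 i f)
    show δ a i x = bdCast G rfl (iterCoface G δ a 1 _ x)
    rw [bdCast_rfl, iterCoface_succ]
    show δ a i x = δ (a + 0) (insF f i (pins 0 i f) ((Fin.last 0 : Fin 1) : ℕ)) _
    simp [insF, hp, iterCoface]
  | succ t ih =>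
    rw [iterCoface_succ]
    have hcast : (fun m : Fin t => (fun m : Fin (t+1) => f (m : ℕ)) m.castSucc)
        = fun m : Fin t => f (m : ℕ) := rfl
    rw [hcast, ih, delta_bdCast]
    set p := pins t i f with hp
    by_cases hc : p = t ∧ f t ≤ i + t
    · -- bumping case: pins (t+1) i f = t+1
      have hq : pins (t+1) i f = t+1 := by
        refine pins_eq (fun k hk => ?_) (Or.inl le_rfl)
        rcases Nat.lt_or_ge k t with hk' | hk'
        · exact ⟨(pins_lt (hp ▸ hc.1 ▸ hk' : k < pins t i f)).2, by omega⟩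
        · have : k = t := by omega
          subst this; exact ⟨hc.2, by omega⟩
      rw [hq]
      rw [iterCoface_succ δ a (t+1) (fun m : Fin (t+2) => insF f i (t+1) (m:ℕ)) x]
      -- RHS = δ (a+t+1) (insF f i (t+1) (t+1)) (iterCoface a (t+1) (fun m => f m) x)
      have e1 : insF f i (t+1) ((Fin.last (t+1) : Fin (t+2)) : ℕ) = i + (t+1) := by
        simp [insF]
      have e2 : (fun m : Fin (t+1) => insF f i (t+1)
          (((m : Fin (t+1)).castSucc : Fin (t+2)) : ℕ)) = fun m : Fin (t+1) => f (m : ℕ) := by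
        funext m
        have : (m : ℕ) < t + 1 := m.isLt
        simp [insF, this]
      rw [e1, e2]
      -- LHS inner: iterCoface a (t+1) (insF f i p) with p = t
      rw [iterCoface_succ δ a t (fun m : Fin (t+1) => insF f i p (m:ℕ)) x]
      have e3 : insF f i p ((Fin.last t : Fin (t+1)) : ℕ) = i + t := by
        simp [insF, hc.1]
      have e4 : (fun m : Fin t => insF f i p (((m : Fin t).castSucc : Fin (t+1)) : ℕ))
          = fun m : Fin t => f (m : ℕ) := by
        funext m
        have : (m : ℕ) < p := by have := m.isLt; omega
        simp [insF, this]
      rw [e3, e4]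
      rw [iterCoface_succ δ a t (fun m : Fin (t+1) => f (m : ℕ)) x]
      have e5 : f ((Fin.last t : Fin (t+1)) : ℕ) = f t := rfl
      rw [e5]
      congr 1
      exact h.coface_coface (a + t) (i + t) (f t) hc.2 (by omega) _
    · -- direct case: pins (t+1) i f = p
      have hple : p ≤ t := pins_le t i f
      have hq : pins (t+1) i f = p := by
        refine pins_eq (fun k hk => ?_) ?_
        · have := pins_lt (hp ▸ hk : k < pins t i f)
          exact ⟨this.2, by omega⟩
        · rcases pins_spec t i f with hs | hs
          · right
            have hft : ¬ (f t ≤ i + t) := fun hft => hc ⟨hp.trans hs, hft⟩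
            have hpt : p = t := hp.trans hs
            rw [hpt]; omega
          · right; rw [← hp] at hs; omega
      rw [hq]
      rw [iterCoface_succ δ a (t+1) (fun m : Fin (t+2) => insF f i p (m:ℕ)) x]
      have e1 : insF f i p ((Fin.last (t+1) : Fin (t+2)) : ℕ) = f t := by
        have h1 : ¬ ((t+1 : ℕ) < p) := by omega
        have h2 : ¬ ((t+1 : ℕ) = p) := by omega
        simp [insF, h1, h2]
      have e2 : (fun m : Fin (t+1) => insF f i p
          (((m : Fin (t+1)).castSucc : Fin (t+2)) : ℕ))
          = fun m : Fin (t+1) => insF f i p (m : ℕ) := rfl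
      rw [e1, e2]
      rfl

lemma smles {t : ℕ} {g : ℕ → ℕ} (hm : ∀ k, k + 1 < t → g k < g (k + 1)) :
    ∀ l, l < t → ∀ k, k ≤ l → g k + (l - k) ≤ g l := by
  intro l
  induction l with
  | zero =>
    intro _ k hk
    have hk0 : k = 0 := Nat.le_zero.mp hk
    subst hk0; omega
  | succ l ih =>
    intro hl k hk
    rcases Nat.eq_or_lt_of_le hk with h | h
    · subst h; omega
    · have h1 := ih (by omega) k (by omega)
      have h2 := hm l (by omega)
      omega

lemma smlt' {t : ℕ} {g : ℕ → ℕ} (hm : ∀ k, k + 1 < t → g k < g (k + 1))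
    {k l : ℕ} (hkl : k < l) (hl : l < t) : g k < g l := by
  have := smles hm l hl k (le_of_lt hkl); omega

lemma insF_le {f : ℕ → ℕ} {i p t a : ℕ} (hp : p ≤ t) (hi : i ≤ a + 1)
    (hb : ∀ k, k < t → f k ≤ a + t + 1) : ∀ m, m ≤ t → insF f i p m ≤ a + t + 1 := by
  intro m hm
  unfold insF
  split_ifs with h1 h2
  · exact hb m (by omega)
  · omega
  · exact hb (m - 1) (by omega)

lemma insF_self {f : ℕ → ℕ} {i p : ℕ} : insF f i p p = i + p := by
  unfold insF; rw [if_neg (by omega), if_pos rfl]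

lemma insF_mono {f : ℕ → ℕ} {i t : ℕ} (hm : ∀ k, k + 1 < t → f k < f (k + 1)) :
    ∀ m, m + 1 ≤ t → insF f i (pins t i f) m < insF f i (pins t i f) (m + 1) := by
  intro m hm1
  have hple : pins t i f ≤ t := pins_le t i f
  rcases Nat.lt_trichotomy (m + 1) (pins t i f) with hcase | hcase | hcase
  · rw [show insF f i (pins t i f) m = f m from if_pos (by omega),
      show insF f i (pins t i f) (m + 1) = f (m + 1) from if_pos hcase]
    exact hm m (by omega)
  · rw [show insF f i (pins t i f) m = f m from if_pos (by omega),
      show insF f i (pins t i f) (m + 1) = i + pins t i f from by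
        unfold insF; rw [if_neg (by omega), if_pos hcase]]
    have := pins_lt (show m < pins t i f by omega)
    omega
  · rcases Nat.lt_or_ge m (pins t i f) with hm2 | hm2
    · omega
    rcases Nat.eq_or_lt_of_le hm2 with hm3 | hm3
    · subst hm3
      rw [show insF f i (pins t i f) (pins t i f) = i + pins t i f from insF_self,
        show insF f i (pins t i f) (pins t i f + 1) = f (pins t i f) from by
          unfold insF; rw [if_neg (by omega), if_neg (by omega)]; congr 1]
      rcases pins_spec t i f with hs | hs
      · omega
      · omega
    · rw [show insF f i (pins t i f) m = f (m - 1) from by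
        unfold insF; rw [if_neg (by omega), if_neg (by omega)],
        show insF f i (pins t i f) (m + 1) = f m from by
        unfold insF; rw [if_neg (by omega), if_neg (by omega)]; congr 1]
      have := hm (m - 1) (by omega)
      rw [show m - 1 + 1 = m by omega] at this
      exact this

lemma delF_le {g : ℕ → ℕ} {p t a : ℕ} (hb : ∀ k, k < t + 1 → g k ≤ a + t + 1) :
    ∀ m, m < t → delF g p m ≤ a + t + 1 := by
  intro m hmt
  unfold delF
  split_ifs
  · exact hb m (by omega)
  · exact hb (m + 1) (by omega)

lemma delF_mono {g : ℕ → ℕ} {p t : ℕ} (hm : ∀ k, k + 1 < t + 1 → g k < g (k + 1)) :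
    ∀ m, m + 1 < t → delF g p m < delF g p (m + 1) := by
  intro m hmt
  unfold delF
  split_ifs with h1 h2 h2
  · exact smlt' hm (by omega) (by omega)
  · exact smlt' hm (by omega) (by omega)
  · omega
  · exact smlt' hm (by omega) (by omega)

lemma bwd_i {g : ℕ → ℕ} {p t a : ℕ} (hp : p ≤ t) (hm : ∀ k, k + 1 < t + 1 → g k < g (k + 1))
    (hb : ∀ k, k < t + 1 → g k ≤ a + t + 1) : p ≤ g p ∧ g p ≤ a + 1 + p := by
  constructor
  · rcases Nat.eq_zero_or_pos p with h | h
    · omega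
    · have := smles hm p (by omega) 0 (by omega); omega
  · rcases Nat.eq_or_lt_of_le hp with h | h
    · subst h; have := hb p (by omega); omega
    · have h1 := smles hm t (by omega) p (by omega)
      have h2 := hb t (by omega)
      omega

lemma pins_delF {g : ℕ → ℕ} {p t : ℕ} (hp : p ≤ t) (hgp : p ≤ g p)
    (hm : ∀ k, k + 1 < t + 1 → g k < g (k + 1)) :
    pins t (g p - p) (delF g p) = p := by
  refine pins_eq (fun k hk => ?_) ?_
  · refine ⟨?_, by omega⟩
    rw [show delF g p k = g k from if_pos hk]
    rcases Nat.eq_or_lt_of_le (show k ≤ p by omega) with h | h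
    · omega
    · have h2 := smles hm p (by omega) k (by omega)
      omega
  · rcases Nat.eq_or_lt_of_le hp with h | h
    · left; omega
    · right
      rw [show delF g p p = g (p + 1) from if_neg (by omega)]
      have := hm p (by omega)
      omega

lemma insF_delF {g : ℕ → ℕ} {p : ℕ} (hgp : p ≤ g p) :
    ∀ m, insF (delF g p) (g p - p) p m = g m := by
  intro m
  rcases Nat.lt_trichotomy m p with h | h | h
  · unfold insF delF; rw [if_pos h, if_pos h]
  · subst h
    rw [insF_self]; omega
  · unfold insF delF
    rw [if_neg (by omega), if_neg (by omega), if_neg (by omega)]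
    congr 1
    omega

lemma delF_insF {f : ℕ → ℕ} {i p : ℕ} : ∀ m, delF (insF f i p) p m = f m := by
  intro m
  rcases Nat.lt_or_ge m p with h | h
  · unfold delF insF; rw [if_pos h, if_pos h]
  · unfold delF insF
    rw [if_neg (by omega), if_neg (by omega), if_neg (by omega)]
    congr 1

def natf {t N : ℕ} (c : Fin t → Fin N) : ℕ → ℕ := fun m =>
  if h : m < t then (c ⟨m, h⟩ : ℕ) else 0

lemma natf_fin {t N : ℕ} (c : Fin t → Fin N) (u : Fin t) : natf c (u : ℕ) = (c u : ℕ) := by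
  simp [natf, u.isLt]

lemma natf_mono {t N : ℕ} {c : Fin t → Fin N} (hc : StrictMono c) :
    ∀ k, k + 1 < t → natf c k < natf c (k + 1) := by
  intro k hk
  rw [show natf c k = (c ⟨k, by omega⟩ : ℕ) from dif_pos (by omega),
    show natf c (k + 1) = (c ⟨k + 1, hk⟩ : ℕ) from dif_pos hk]
  exact hc (show (⟨k, by omega⟩ : Fin t) < ⟨k + 1, hk⟩ from by simp [Fin.lt_def])

lemma natf_le {t N : ℕ} (c : Fin t → Fin N) : ∀ k, k < t → natf c k ≤ N - 1 := by
  intro k hk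
  rw [show natf c k = (c ⟨k, hk⟩ : ℕ) from dif_pos hk]
  have := (c ⟨k, hk⟩).isLt
  omega

lemma strictMono_fin {t N : ℕ} {c : Fin t → Fin N}
    (h : ∀ k, k + 1 < t → natf c k < natf c (k + 1)) : StrictMono c := by
  intro u v huv
  have := smlt' h (show (u : ℕ) < (v : ℕ) from huv) v.isLt
  rw [natf_fin, natf_fin] at this
  exact this

def fwdF (a t : ℕ) (z : (Fin t → Fin (a + 1 + t + 1)) × ℕ) :
    (Fin (t + 1) → Fin (a + (t + 1) + 1)) × ℕ :=
  (fun m => ⟨insF (natf z.1) z.2 (pins t z.2 (natf z.1)) (m : ℕ) % (a + (t + 1) + 1),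
    Nat.mod_lt _ (Nat.succ_pos _)⟩, pins t z.2 (natf z.1))

def bwdF (a t : ℕ) (z : (Fin (t + 1) → Fin (a + (t + 1) + 1)) × ℕ) :
    (Fin t → Fin (a + 1 + t + 1)) × ℕ :=
  (fun m => ⟨delF (natf z.1) z.2 (m : ℕ) % (a + 1 + t + 1), Nat.mod_lt _ (Nat.succ_pos _)⟩,
    natf z.1 z.2 - z.2)

lemma jamesHopf_def (δ : ∀ n : ℕ, ℕ → (G n →+ G (n + 1))) (k r : ℕ) (x : G k) :
    jamesHopf G δ k r x
      = ∑ c ∈ Finset.univ.filter (fun c : Fin r → Fin (k + r + 1) => StrictMono c),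
          iterCoface G δ k r (fun i => ((c i : ℕ))) x := rfl

lemma jamesHopf_sigma (h : IsBiDelta G d δ) (a t : ℕ) (x : G a) :
    jamesHopf G δ (a + 1) t (sigmaMap G δ a x)
      = (t + 1) • bdCast G (bd_eq a t) (jamesHopf G δ a (t + 1) x) := by
  classical
  calc jamesHopf G δ (a + 1) t (sigmaMap G δ a x)
      = ∑ c ∈ Finset.univ.filter (fun c : Fin t → Fin (a + 1 + t + 1) => StrictMono c),
          ∑ i ∈ Finset.range (a + 2),
            iterCoface G δ (a + 1) t (fun m => ((c m : ℕ))) (δ a i x) := by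
        rw [jamesHopf_def]
        exact Finset.sum_congr rfl fun c _ => iterCoface_sum δ (a + 1) t _ _ _
    _ = ∑ z ∈ (Finset.univ.filter (fun c : Fin t → Fin (a + 1 + t + 1) => StrictMono c)) ×ˢ
          Finset.range (a + 2),
          iterCoface G δ (a + 1) t (fun m => ((z.1 m : ℕ))) (δ a z.2 x) := by
        rw [Finset.sum_product]
    _ = ∑ z ∈ (Finset.univ.filter (fun c : Fin (t + 1) → Fin (a + (t + 1) + 1) => StrictMono c)) ×ˢ
          Finset.range (t + 1),
          bdCast G (bd_eq a t)
            (iterCoface G δ a (t + 1) (fun m => ((z.1 m : ℕ))) x) := by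
        have hmemP1 : ∀ z : (Fin t → Fin (a + 1 + t + 1)) × ℕ,
            z ∈ (Finset.univ.filter (fun c : Fin t → Fin (a + 1 + t + 1) => StrictMono c)) ×ˢ
              Finset.range (a + 2) ↔ StrictMono z.1 ∧ z.2 < a + 2 := by
          intro z; simp [Finset.mem_product]
        have hmemP2 : ∀ z : (Fin (t + 1) → Fin (a + (t + 1) + 1)) × ℕ,
            z ∈ (Finset.univ.filter
                (fun c : Fin (t + 1) → Fin (a + (t + 1) + 1) => StrictMono c)) ×ˢ
              Finset.range (t + 1) ↔ StrictMono z.1 ∧ z.2 < t + 1 := by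
          intro z; simp [Finset.mem_product]
        -- generic facts for forward direction
        have hfwd : ∀ z : (Fin t → Fin (a + 1 + t + 1)) × ℕ, StrictMono z.1 → z.2 < a + 2 →
            (∀ m : Fin (t + 1),
              ((fwdF a t z).1 m : ℕ) = insF (natf z.1) z.2 (pins t z.2 (natf z.1)) (m : ℕ)) := by
          intro z hc hi m
          have hple : pins t z.2 (natf z.1) ≤ t := pins_le _ _ _
          have hb : ∀ k, k < t → natf z.1 k ≤ a + t + 1 := by
            intro k hk; have := natf_le z.1 k hk; omega
          have hbd := insF_le hple (show z.2 ≤ a + 1 by omega) hb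
          show insF (natf z.1) z.2 (pins t z.2 (natf z.1)) (m : ℕ) % (a + (t + 1) + 1) = _
          exact Nat.mod_eq_of_lt (by have := hbd (m : ℕ) (by omega); omega)
        have hbwd : ∀ z : (Fin (t + 1) → Fin (a + (t + 1) + 1)) × ℕ, z.2 < t + 1 →
            (∀ m : Fin t, ((bwdF a t z).1 m : ℕ) = delF (natf z.1) z.2 (m : ℕ)) := by
          intro z hpz m
          have hb : ∀ k, k < t + 1 → natf z.1 k ≤ a + t + 1 := by
            intro k hk; have := natf_le z.1 k hk; omega
          show delF (natf z.1) z.2 (m : ℕ) % (a + 1 + t + 1) = _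
          exact Nat.mod_eq_of_lt
            (by have := delF_le (p := z.2) hb (m : ℕ) m.isLt; omega)
        refine Finset.sum_nbij' (fwdF a t) (bwdF a t) ?_ ?_ ?_ ?_ ?_
        · intro z hz
          rw [hmemP1] at hz
          obtain ⟨hc, hi⟩ := hz
          rw [hmemP2]
          have hple : pins t z.2 (natf z.1) ≤ t := pins_le _ _ _
          refine ⟨?_, by show pins t z.2 (natf z.1) < t + 1; omega⟩
          apply strictMono_fin
          intro k hk
          rw [show natf (fwdF a t z).1 k = ((fwdF a t z).1 ⟨k, by omega⟩ : ℕ) from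
              dif_pos (by omega),
            show natf (fwdF a t z).1 (k + 1) = ((fwdF a t z).1 ⟨k + 1, hk⟩ : ℕ) from dif_pos hk,
            hfwd z hc hi, hfwd z hc hi]
          exact insF_mono (natf_mono hc) k (by omega)
        · intro z hz
          rw [hmemP2] at hz
          obtain ⟨hg, hpz⟩ := hz
          rw [hmemP1]
          have hmono := natf_mono hg
          have hb : ∀ k, k < t + 1 → natf z.1 k ≤ a + t + 1 := by
            intro k hk; have := natf_le z.1 k hk; omega
          have hiw := bwd_i (show z.2 ≤ t by omega) hmono hb
          constructor
          · apply strictMono_fin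
            intro k hk
            rw [show natf (bwdF a t z).1 k = ((bwdF a t z).1 ⟨k, by omega⟩ : ℕ) from
                dif_pos (by omega),
              show natf (bwdF a t z).1 (k + 1) = ((bwdF a t z).1 ⟨k + 1, hk⟩ : ℕ) from dif_pos hk,
              hbwd z hpz, hbwd z hpz]
            exact delF_mono hmono k hk
          · show natf z.1 z.2 - z.2 < a + 2
            omega
        · intro z hz
          obtain ⟨c, i⟩ := z
          rw [hmemP1] at hz
          obtain ⟨hc, hi⟩ := hz
          simp only at hc hi
          have hple : pins t i (natf c) ≤ t := pins_le _ _ _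
          have hnatf : ∀ k, k < t + 1 →
              natf (fwdF a t (c, i)).1 k = insF (natf c) i (pins t i (natf c)) k := by
            intro k hk
            rw [show natf (fwdF a t (c, i)).1 k = ((fwdF a t (c, i)).1 ⟨k, hk⟩ : ℕ) from
              dif_pos hk]
            exact hfwd (c, i) hc hi ⟨k, hk⟩
          have hdel : ∀ m : Fin t,
              delF (natf (fwdF a t (c, i)).1) (pins t i (natf c)) (m : ℕ) = natf c (m : ℕ) := by
            intro m
            have heq : delF (natf (fwdF a t (c, i)).1) (pins t i (natf c)) (m : ℕ)
                = delF (insF (natf c) i (pins t i (natf c)))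
                    (pins t i (natf c)) (m : ℕ) := by
              unfold delF
              split_ifs
              · exact hnatf (m : ℕ) (by omega)
              · exact hnatf ((m : ℕ) + 1) (by have := m.isLt; omega)
            rw [heq, delF_insF]
          rw [Prod.mk.injEq]
          constructor
          · funext m
            apply Fin.ext
            show delF (natf (fwdF a t (c, i)).1) (fwdF a t (c, i)).2 (m : ℕ)
                % (a + 1 + t + 1) = ((c m : ℕ))
            have h2 := hdel m
            rw [show (fwdF a t (c, i)).2 = pins t i (natf c) from rfl, h2, natf_fin]
            exact Nat.mod_eq_of_lt (c m).isLt
          · show natf (fwdF a t (c, i)).1 (fwdF a t (c, i)).2 - (fwdF a t (c, i)).2 = i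
            rw [show (fwdF a t (c, i)).2 = pins t i (natf c) from rfl,
              hnatf (pins t i (natf c)) (by omega), insF_self]
            omega
        · intro z hz
          obtain ⟨g, p⟩ := z
          rw [hmemP2] at hz
          obtain ⟨hg, hpz⟩ := hz
          simp only at hg hpz
          have hmono := natf_mono hg
          have hb : ∀ k, k < t + 1 → natf g k ≤ a + t + 1 := by
            intro k hk; have := natf_le g k hk; omega
          have hiw := bwd_i (show p ≤ t by omega) hmono hb
          have hnc : natf (bwdF a t (g, p)).1 = delF (natf g) p := by
            funext k
            rcases Nat.lt_or_ge k t with hk | hk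
            · rw [show natf (bwdF a t (g, p)).1 k = ((bwdF a t (g, p)).1 ⟨k, hk⟩ : ℕ) from
                dif_pos hk]
              exact hbwd (g, p) hpz ⟨k, hk⟩
            · rw [show natf (bwdF a t (g, p)).1 k = 0 from dif_neg (by omega)]
              unfold delF
              rw [if_neg (by omega),
                show natf g (k + 1) = 0 from dif_neg (by omega)]
          have hpb : pins t (bwdF a t (g, p)).2 (natf (bwdF a t (g, p)).1) = p := by
            rw [hnc]
            exact pins_delF (by omega) hiw.1 hmono
          rw [Prod.mk.injEq]
          constructor
          · funext m
            apply Fin.ext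
            show insF (natf (bwdF a t (g, p)).1) (bwdF a t (g, p)).2
                (pins t (bwdF a t (g, p)).2 (natf (bwdF a t (g, p)).1)) (m : ℕ)
                % (a + (t + 1) + 1) = ((g m : ℕ))
            rw [hpb, hnc]
            rw [show (bwdF a t (g, p)).2 = natf g p - p from rfl]
            rw [insF_delF hiw.1, natf_fin]
            exact Nat.mod_eq_of_lt (g m).isLt
          · exact hpb
        · intro z hz
          rw [hmemP1] at hz
          obtain ⟨hc, hi⟩ := hz
          have e0 : (fun m : Fin t => ((z.1 m : ℕ))) = fun m : Fin t => natf z.1 (m : ℕ) := by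
            funext m; rw [natf_fin]
          rw [e0, lemA h a (show z.2 ≤ a + 1 by omega) t (natf z.1) x]
          have efun : (fun m : Fin (t + 1) => (((fwdF a t z).1 m : ℕ)))
              = fun m : Fin (t + 1) => insF (natf z.1) z.2 (pins t z.2 (natf z.1)) (m : ℕ) :=
            funext (hfwd z hc hi)
          rw [efun]
    _ = ∑ c ∈ Finset.univ.filter
          (fun c : Fin (t + 1) → Fin (a + (t + 1) + 1) => StrictMono c),
          (t + 1) • bdCast G (bd_eq a t)
            (iterCoface G δ a (t + 1) (fun m => ((c m : ℕ))) x) := by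
        rw [Finset.sum_product]
        refine Finset.sum_congr rfl fun c _ => ?_
        have hred : ∀ y : ℕ, (fun m : Fin (t + 1) => (((c, y).1 m : ℕ)))
            = fun m : Fin (t + 1) => ((c m : ℕ)) := fun y => rfl
        simp only [hred]
        rw [Finset.sum_const, Finset.card_range]
    _ = (t + 1) • bdCast G (bd_eq a t)
          (jamesHopf G δ a (t + 1) x) := by
        rw [jamesHopf_def, map_sum, Finset.smul_sum]

lemma bdCast_self {m : ℕ} (pf : m = m) (x : G m) : bdCast G pf x = x := rfl

lemma sigmaMap_bdCast (δ : ∀ n : ℕ, ℕ → (G n →+ G (n + 1))) {m n : ℕ} (h' : m = n) (x : G m) :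
    sigmaMap G δ n (bdCast G h' x)
      = bdCast G (by omega : m + 1 = n + 1) (sigmaMap G δ m x) := by
  subst h'; rfl

lemma sigmaIter_shift (δ : ∀ n : ℕ, ℕ → (G n →+ G (n + 1))) (s : ℕ) : ∀ r (x : G s),
    sigmaIter G δ s (r + 1) x
      = bdCast G (by omega : s + 1 + r = s + (r + 1))
          (sigmaIter G δ (s + 1) r (sigmaMap G δ s x)) := by
  intro r
  induction r with
  | zero => intro x; rfl
  | succ r ih =>
    intro x
    show sigmaMap G δ (s + (r + 1)) (sigmaIter G δ s (r + 1) x) = _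
    rw [ih, sigmaMap_bdCast]
    rfl

lemma sigmaMap_eq_jamesHopf (δ : ∀ n : ℕ, ℕ → (G n →+ G (n + 1))) (s : ℕ) (x : G s) :
    sigmaMap G δ s x = jamesHopf G δ s 1 x := by
  classical
  rw [jamesHopf_def,
    Finset.filter_true_of_mem (fun c _ => Subsingleton.strictMono c),
    show sigmaMap G δ s x = ∑ i ∈ Finset.range (s + 2), δ s i x from rfl,
    ← Fin.sum_univ_eq_sum_range (fun i => δ s i x) (s + 2)]
  exact (Fintype.sum_equiv (Equiv.funUnique (Fin 1) (Fin (s + 1 + 1)))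
    (fun c => iterCoface G δ s 1 (fun i => ((c i : ℕ))) x)
    (fun j => δ s (j : ℕ) x) (fun c => rfl)).symm

lemma part1 (h : IsBiDelta G d δ) : ∀ (r s : ℕ) (x : G s),
    sigmaIter G δ s (r + 1) x = Nat.factorial (r + 1) • jamesHopf G δ s (r + 1) x := by
  intro r
  induction r with
  | zero =>
    intro s x
    show sigmaMap G δ (s + 0) (sigmaIter G δ s 0 x) = _
    rw [show sigmaIter G δ s 0 x = x from rfl,
      show sigmaMap G δ (s + 0) x = sigmaMap G δ s x from rfl, sigmaMap_eq_jamesHopf]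
    rw [show Nat.factorial 1 = 1 from rfl, one_smul]
  | succ r ih =>
    intro s x
    rw [sigmaIter_shift, ih (s + 1) (sigmaMap G δ s x), map_nsmul,
      jamesHopf_sigma h s (r + 1), map_nsmul, bdCast_bdCast, smul_smul, bdCast_self]
    congr 1
    rw [Nat.factorial_succ (r + 1)]
    ring

end Aux

/-- For an abelian bi-Δ-group `G` and `0 ≤ s < n` (here `n = s + r + 1`),
`σ_n ∘ σ_{n-1} ∘ ⋯ ∘ σ_{s+1} = (n-s)! · H_{s,n}` as homomorphisms `G_s → G_n`.
In particular, for `n ≤ m` (here `n = a + 1`, `m = n + t`),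
`H_{n,m} ∘ σ_n = (m - n + 1) · H_{n-1,m}` as homomorphisms `G_{n-1} → G_m`. -/
theorem stmt10 (G : ℕ → Type u) [∀ n, AddCommGroup (G n)]
    (d : ∀ n : ℕ, ℕ → (G (n + 1) →+ G n)) (δ : ∀ n : ℕ, ℕ → (G n →+ G (n + 1)))
    (h : IsBiDelta G d δ) :
    (∀ (s r : ℕ) (x : G s),
      sigmaIter G δ s (r + 1) x = Nat.factorial (r + 1) • jamesHopf G δ s (r + 1) x) ∧
    ∀ (a t : ℕ) (x : G a),
      jamesHopf G δ (a + 1) t (sigmaMap G δ a x)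
        = (t + 1) •
            cast (congrArg G (by omega : a + (t + 1) = a + 1 + t))
              (jamesHopf G δ a (t + 1) x) := by
  constructor
  · intro s r x
    exact part1 h r s x
  · intro a t x
    rw [jamesHopf_sigma h a t x, bdCast_apply]
end
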